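/- For every natural number n ≥ 2, one has n/(4·log n) ≤ φ(n) ≤ n − 1, where φ is Euler's totient function. -/

import Mathlib

open Finset in
lemma aux_prod_ge (s : Finset ℕ) (hs : ∀ p ∈ s, 2 ≤ p) :
    (1 : ℚ) / (s.card + 1) ≤ ∏ p ∈ s, (1 - (p : ℚ)⁻¹) := by
  induction s using Finset.induction_on_max with
  | empty => simp
  | insert a s ha ih =>
    have ha2 : 2 ≤ a := hs a (mem_insert_self a s)
    have hsub : s ⊆ Finset.Ico 2 a := by
      intro x hx
      exact Finset.mem_Ico.mpr ⟨hs x (mem_insert_of_mem hx), ha x hx⟩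
    have hcard : s.card ≤ a - 2 := by
      simpa using Finset.card_le_card hsub
    have hanot : a ∉ s := fun h => lt_irrefl a (ha a h)
    rw [Finset.prod_insert hanot, Finset.card_insert_of_notMem hanot]
    have ih' := ih (fun p hp => hs p (mem_insert_of_mem hp))
    set k : ℕ := s.card
    have hak : (k : ℚ) + 2 ≤ a := by
      have : k + 2 ≤ a := by omega
      exact_mod_cast this
    have h1 : (0:ℚ) < (k:ℚ) + 1 := by positivity
    have h2 : (0:ℚ) < (k:ℚ) + 2 := by positivity
    have hapos : (0:ℚ) < a := by positivity
    have key : (1 : ℚ) / ((k:ℚ) + 1 + 1) ≤ (1 - (a:ℚ)⁻¹) * (1 / (k + 1)) := by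
      have : (1 - (a:ℚ)⁻¹) = (a - 1)/a := by field_simp
      rw [this, div_mul_div_comm, div_le_div_iff₀ (by linarith) (by positivity)]
      ring_nf
      nlinarith [hak, h1]
    push_cast
    refine key.trans ?_
    have hfac : (0:ℚ) ≤ 1 - (a:ℚ)⁻¹ := by
      rw [sub_nonneg, inv_le_one_iff₀]
      right; exact_mod_cast le_trans one_le_two ha2
    exact mul_le_mul_of_nonneg_left ih' hfac

theorem totient_bounds (n : ℕ) (hn : 2 ≤ n) :
    (n : ℝ) / (4 * Real.log n) ≤ (Nat.totient n : ℝ) ∧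
    (Nat.totient n : ℝ) ≤ (n : ℝ) - 1 := by
  have hn0 : (0:ℝ) < n := by positivity
  constructor
  · -- lower bound
    set k : ℕ := n.primeFactors.card
    -- φ(n) ≥ n/(k+1) in ℚ
    have hq : (n : ℚ) / (k + 1) ≤ (Nat.totient n : ℚ) := by
      rw [Nat.totient_eq_mul_prod_factors]
      have := aux_prod_ge n.primeFactors (fun p hp => (Nat.prime_of_mem_primeFactors hp).two_le)
      have hn0' : (0:ℚ) ≤ n := by positivity
      calc (n:ℚ)/(k+1) = n * (1/(k+1)) := by ring
        _ ≤ n * ∏ p ∈ n.primeFactors, (1 - (p:ℚ)⁻¹) := by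
            exact mul_le_mul_of_nonneg_left this hn0'
    have hr : (n : ℝ) / ((k:ℝ) + 1) ≤ (Nat.totient n : ℝ) := by
      have : ((n : ℚ) / (k + 1) : ℚ) ≤ ((Nat.totient n : ℚ)) := hq
      have := (Rat.cast_le (K := ℝ)).mpr this
      push_cast at this
      convert this using 2
    -- 2^k ≤ n
    have h2k : (2:ℕ)^k ≤ n := by
      calc (2:ℕ)^k ≤ ∏ p ∈ n.primeFactors, p :=
            Finset.pow_card_le_prod _ _ _ (fun p hp => (Nat.prime_of_mem_primeFactors hp).two_le)
        _ ≤ n := Nat.le_of_dvd (by omega) (Nat.prod_primeFactors_dvd n)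
    -- k * log 2 ≤ log n
    have hklog : (k:ℝ) * Real.log 2 ≤ Real.log n := by
      calc (k:ℝ) * Real.log 2 = Real.log ((2:ℝ)^k) := by
            rw [Real.log_pow]
        _ ≤ Real.log n := Real.log_le_log (by positivity) (by exact_mod_cast h2k)
    have hlog2 : (0.6931471803 : ℝ) < Real.log 2 := Real.log_two_gt_d9
    have hlogn : Real.log 2 ≤ Real.log n := Real.log_le_log (by norm_num) (by exact_mod_cast hn)
    have hk41 : (k:ℝ) + 1 ≤ 4 * Real.log n := by
      nlinarith [hklog, hlog2, hlogn]
    have hpos : (0:ℝ) < (k:ℝ) + 1 := by positivity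
    calc (n:ℝ) / (4 * Real.log n) ≤ (n:ℝ) / (k + 1) := by
          apply div_le_div_of_nonneg_left (le_of_lt hn0) hpos hk41
      _ ≤ _ := hr
  · have h := Nat.totient_lt n (by omega)
    have : Nat.totient n + 1 ≤ n := h
    have := (Nat.cast_le (α := ℝ)).mpr this
    push_cast at this
    linarith
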